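/- arXiv:2312.00995 — 2 statements merged into one kernel-verified Lean document; each statement's English description precedes it below -/
import Mathlib

section
/- Let Y be a finite set with |Y| = K ≥ 2 and Δ the probability simplex on Y. For any probability measure Q on Δ, define EU(Q) = (1/2)·min_{q∈Δ} E_{p∼Q}[‖p − q‖₁]. Then EU(Q) ≤ (K−1)/K. -/
open MeasureTheory Finset

lemma aux_ptwise {K : ℕ} (hK : 2 ≤ K) {p : Fin K → ℝ}
    (hp : p ∈ stdSimplex ℝ (Fin K)) :
    ∑ y, |p y - (1 : ℝ) / K| ≤ 2 * ((K - 1) / K) := by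
  obtain ⟨h0, hsum⟩ := hp
  have hK0 : (0 : ℝ) < K := by positivity
  have hne : (Finset.univ : Finset (Fin K)).Nonempty := by
    simp [Finset.univ_nonempty_iff]
    exact Fin.pos_iff_nonempty.mp (by omega)
  -- there is a coordinate ≥ 1/K
  have hex : ∃ y : Fin K, (1 : ℝ) / K ≤ p y := by
    by_contra h
    push_neg at h
    have : ∑ y, p y < ∑ y : Fin K, (1 : ℝ) / K :=
      Finset.sum_lt_sum_of_nonempty hne fun y _ => h y
    rw [hsum, Finset.sum_const, Finset.card_univ, Fintype.card_fin] at this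
    rw [nsmul_eq_mul] at this
    field_simp at this
    exact lt_irrefl _ this
  obtain ⟨y₀, hy₀⟩ := hex
  have habs : ∀ y : Fin K, |p y - (1 : ℝ) / K|
      = p y + 1 / K - 2 * min (p y) (1 / K) := by
    intro y
    rcases le_total (p y) ((1 : ℝ) / K) with h | h
    · rw [min_eq_left h, abs_of_nonpos (by linarith)]; ring
    · rw [min_eq_right h, abs_of_nonneg (by linarith)]; ring
  have hmin : (1 : ℝ) / K ≤ ∑ y, min (p y) ((1 : ℝ) / K) := by
    have := Finset.single_le_sum (f := fun y => min (p y) ((1 : ℝ) / K))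
      (fun y _ => le_min (h0 y) (by positivity)) (Finset.mem_univ y₀)
    calc (1 : ℝ) / K = min (p y₀) (1 / K) := (min_eq_right hy₀).symm
      _ ≤ _ := this
  calc ∑ y, |p y - (1 : ℝ) / K|
      = ∑ y, (p y + 1 / K - 2 * min (p y) (1 / K)) := by
        exact Finset.sum_congr rfl fun y _ => habs y
    _ = (∑ y, p y) + (↑K * (1 / K)) - 2 * ∑ y, min (p y) ((1 : ℝ) / K) := by
        rw [Finset.sum_sub_distrib, Finset.sum_add_distrib, Finset.sum_const,
          Finset.card_univ, Fintype.card_fin, nsmul_eq_mul, Finset.mul_sum]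
    _ ≤ 1 + 1 - 2 * (1 / K) := by
        rw [hsum]
        have : (K : ℝ) * (1 / K) = 1 := by field_simp
        rw [this]
        linarith
    _ = 2 * ((K - 1) / K) := by field_simp; ring

/-- For a probability measure `Q` on the probability simplex on `Fin K`
(`K ≥ 2`), the epistemic uncertainty
`EU(Q) = (1/2) * min_{q ∈ Δ} E_{p∼Q}[‖p - q‖₁]` satisfies `EU(Q) ≤ (K-1)/K`. -/
theorem stmt_6 {K : ℕ} (hK : 2 ≤ K)
    (Q : Measure (Fin K → ℝ)) [IsProbabilityMeasure Q]
    (hsupp : ∀ᵐ p ∂Q, p ∈ stdSimplex ℝ (Fin K))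
    (hint : ∀ q : Fin K → ℝ,
      Integrable (fun p : Fin K → ℝ => ∑ y, |p y - q y|) Q) :
    (1 / 2) * (⨅ q : stdSimplex ℝ (Fin K), ∫ p, ∑ y, |p y - (q : Fin K → ℝ) y| ∂Q)
      ≤ (K - 1) / K := by
  have hK0 : (0 : ℝ) < K := by positivity
  have hq0 : (fun _ : Fin K => (1 : ℝ) / K) ∈ stdSimplex ℝ (Fin K) := by
    constructor
    · intro y; positivity
    · rw [Finset.sum_const, Finset.card_univ, Fintype.card_fin, nsmul_eq_mul]
      field_simp
  have hbdd : BddBelow (Set.range fun q : stdSimplex ℝ (Fin K) =>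
      ∫ p, ∑ y, |p y - (q : Fin K → ℝ) y| ∂Q) := by
    refine ⟨0, ?_⟩
    rintro x ⟨q, rfl⟩
    exact integral_nonneg fun p => Finset.sum_nonneg fun y _ => abs_nonneg _
  have h1 : (⨅ q : stdSimplex ℝ (Fin K), ∫ p, ∑ y, |p y - (q : Fin K → ℝ) y| ∂Q)
      ≤ ∫ p, ∑ y, |p y - (1 : ℝ) / K| ∂Q :=
    ciInf_le hbdd ⟨fun _ => (1 : ℝ) / K, hq0⟩
  have h2 : ∫ p, ∑ y, |p y - (1 : ℝ) / K| ∂Q ≤ 2 * ((K - 1) / K) := by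
    calc ∫ p, ∑ y, |p y - (1 : ℝ) / K| ∂Q
        ≤ ∫ _, 2 * (((K : ℝ) - 1) / K) ∂Q := by
          refine integral_mono_ae (hint fun _ => (1 : ℝ) / K) (integrable_const _) ?_
          filter_upwards [hsupp] with p hp
          exact aux_ptwise hK hp
      _ = 2 * (((K : ℝ) - 1) / K) := by
          simp [integral_const, measure_univ]
  linarith
end

section
/- Let α₁, …, α_K > 0 with α₀ = ∑ᵢ αᵢ, and let Fᵢ denote the CDF of the Beta(αᵢ, α₀ − αᵢ) distribution. The function h(q) = (1/2)·∑ᵢ [ (αᵢ/α₀)(1 − 2·F_{αᵢ+1, α₀−αᵢ}(qᵢ)) + qᵢ(2·Fᵢ(qᵢ) − 1) ] on (0,1)^K restricted to the hyperplane ∑ᵢ qᵢ = 1 has a unique minimizer. -/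
open Finset MeasureTheory

/-- The (unnormalized) Beta integrand. -/
noncomputable def betaKernel (a b x : ℝ) : ℝ := x ^ (a - 1) * (1 - x) ^ (b - 1)

/-- The CDF of the Beta distribution `Beta(a, b)` at `q ∈ (0,1)`. -/
noncomputable def betaCDF (a b q : ℝ) : ℝ :=
  (∫ x in Set.Ioo 0 q, betaKernel a b x) / ∫ x in Set.Ioo (0 : ℝ) 1, betaKernel a b x

namespace Stmt16

open Set intervalIntegral

lemma kernel_pos {a b : ℝ} {x : ℝ} (hx : x ∈ Set.Ioo (0:ℝ) 1) :
    0 < betaKernel a b x :=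
  mul_pos (Real.rpow_pos_of_pos hx.1 _) (Real.rpow_pos_of_pos (by linarith [hx.2]) _)

lemma kernel_measurable (a b : ℝ) : Measurable (betaKernel a b) := by
  unfold betaKernel; fun_prop

lemma kernel_ofReal {a b x : ℝ} (hx : x ∈ Set.Ioo (0:ℝ) 1) :
    ((betaKernel a b x : ℝ) : ℂ) = (x:ℂ) ^ ((a:ℂ) - 1) * (1 - (x:ℂ)) ^ ((b:ℂ) - 1) := by
  have h1 : (0:ℝ) ≤ x := hx.1.le
  have h2 : (0:ℝ) ≤ 1 - x := by linarith [hx.2.le]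
  rw [betaKernel, Complex.ofReal_mul, Complex.ofReal_cpow h1, Complex.ofReal_cpow h2]
  push_cast
  ring_nf

lemma kernel_integrableOn_Ioo {a b : ℝ} (ha : 0 < a) (hb : 0 < b) :
    IntegrableOn (betaKernel a b) (Set.Ioo 0 1) := by
  have h := Complex.betaIntegral_convergent (u := (a:ℂ)) (v := (b:ℂ)) (by simpa) (by simpa)
  rw [intervalIntegrable_iff_integrableOn_Ioc_of_le (by norm_num)] at h
  have hre : IntegrableOn (fun x : ℝ =>
      Complex.re ((x:ℂ) ^ ((a:ℂ) - 1) * (1 - (x:ℂ)) ^ ((b:ℂ) - 1))) (Set.Ioo 0 1) :=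
    IntegrableOn.mono_set (h.re) Set.Ioo_subset_Ioc_self
  refine (integrable_congr ?_).mp hre
  filter_upwards [ae_restrict_mem measurableSet_Ioo] with x hxm
  rw [← kernel_ofReal hxm, Complex.ofReal_re]

lemma kernel_integrableOn_Icc {a b : ℝ} (ha : 0 < a) (hb : 0 < b) :
    IntegrableOn (betaKernel a b) (Set.Icc 0 1) := by
  rw [integrableOn_Icc_iff_integrableOn_Ioo]
  exact kernel_integrableOn_Ioo ha hb

lemma kernel_intervalIntegrable {a b : ℝ} (ha : 0 < a) (hb : 0 < b) {c d : ℝ}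
    (h : Set.uIcc c d ⊆ Set.Icc 0 1) : IntervalIntegrable (betaKernel a b) volume c d := by
  rw [intervalIntegrable_iff]
  exact IntegrableOn.mono_set (kernel_integrableOn_Icc ha hb)
    ((Set.uIoc_subset_uIcc).trans h)

lemma integral_Ioo_eq {a b c : ℝ} (hc : 0 ≤ c) :
    ∫ x in Set.Ioo 0 c, betaKernel a b x = ∫ x in (0:ℝ)..c, betaKernel a b x := by
  rw [intervalIntegral.integral_of_le hc, MeasureTheory.integral_Ioc_eq_integral_Ioo]

lemma C_pos {a b : ℝ} (ha : 0 < a) (hb : 0 < b) :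
    0 < ∫ x in Set.Ioo (0:ℝ) 1, betaKernel a b x := by
  rw [integral_Ioo_eq zero_le_one]
  apply intervalIntegral.intervalIntegral_pos_of_pos_on
    (kernel_intervalIntegrable ha hb (by rw [Set.uIcc_of_le] <;> norm_num))
    (fun x hx => kernel_pos hx) one_pos

lemma P_diff {a b x y : ℝ} (ha : 0 < a) (hb : 0 < b) (hx : x ∈ Set.Icc (0:ℝ) 1)
    (hy : y ∈ Set.Icc (0:ℝ) 1) (hxy : x < y) :
    (∫ t in Set.Ioo 0 y, betaKernel a b t) - ∫ t in Set.Ioo 0 x, betaKernel a b t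
      = ∫ t in x..y, betaKernel a b t := by
  rw [integral_Ioo_eq hx.1, integral_Ioo_eq hy.1]
  have h1 : IntervalIntegrable (betaKernel a b) volume 0 x :=
    kernel_intervalIntegrable ha hb (by rw [Set.uIcc_of_le hx.1]; exact Set.Icc_subset_Icc le_rfl hx.2)
  have h2 : IntervalIntegrable (betaKernel a b) volume x y :=
    kernel_intervalIntegrable ha hb (by rw [Set.uIcc_of_le hxy.le]; exact Set.Icc_subset_Icc hx.1 hy.2)
  rw [← intervalIntegral.integral_add_adjacent_intervals h1 h2]
  ring

lemma betaCDF_strictMonoOn {a b : ℝ} (ha : 0 < a) (hb : 0 < b) :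
    StrictMonoOn (betaCDF a b) (Set.Icc 0 1) := by
  intro x hx y hy hxy
  unfold betaCDF
  have hpos : 0 < ∫ t in x..y, betaKernel a b t :=
    intervalIntegral.intervalIntegral_pos_of_pos_on
      (kernel_intervalIntegrable ha hb
        (by rw [Set.uIcc_of_le hxy.le]; exact Set.Icc_subset_Icc hx.1 hy.2))
      (fun t ht => kernel_pos ⟨lt_of_le_of_lt hx.1 ht.1, lt_of_lt_of_le ht.2 hy.2⟩) hxy
  have hd := P_diff ha hb hx hy hxy
  have hC := C_pos ha hb
  have hPP : (∫ t in Set.Ioo 0 x, betaKernel a b t) < ∫ t in Set.Ioo 0 y, betaKernel a b t := by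
    linarith
  gcongr

lemma betaCDF_zero (a b : ℝ) : betaCDF a b 0 = 0 := by
  simp [betaCDF]

lemma betaCDF_one {a b : ℝ} (ha : 0 < a) (hb : 0 < b) : betaCDF a b 1 = 1 :=
  div_self (C_pos ha hb).ne'

lemma betaCDF_pos {a b : ℝ} (ha : 0 < a) (hb : 0 < b) {q : ℝ} (hq : q ∈ Set.Ioc (0:ℝ) 1) :
    0 < betaCDF a b q := by
  have := betaCDF_strictMonoOn ha hb (Set.left_mem_Icc.mpr zero_le_one)
    ⟨hq.1.le, hq.2⟩ hq.1
  rwa [betaCDF_zero] at this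

lemma betaCDF_lt_one {a b : ℝ} (ha : 0 < a) (hb : 0 < b) {q : ℝ} (hq : q ∈ Set.Ico (0:ℝ) 1) :
    betaCDF a b q < 1 := by
  have := betaCDF_strictMonoOn ha hb ⟨hq.1, hq.2.le⟩ (Set.right_mem_Icc.mpr zero_le_one) hq.2
  rwa [betaCDF_one ha hb] at this

lemma betaCDF_continuousOn {a b : ℝ} (ha : 0 < a) (hb : 0 < b) :
    ContinuousOn (betaCDF a b) (Set.Icc 0 1) := by
  have h : ContinuousOn (fun q : ℝ => ∫ t in Set.Ioc 0 q, betaKernel a b t) (Set.Icc 0 1) :=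
    continuousOn_primitive (kernel_integrableOn_Icc ha hb)
  have h2 : ContinuousOn (fun q : ℝ => ∫ t in Set.Ioo 0 q, betaKernel a b t) (Set.Icc 0 1) := by
    simpa [MeasureTheory.integral_Ioc_eq_integral_Ioo] using h
  exact h2.div_const _

lemma betaCDF_hasDerivAt {a b : ℝ} (ha : 0 < a) (hb : 0 < b) {q : ℝ} (hq : q ∈ Set.Ioo (0:ℝ) 1) :
    HasDerivAt (betaCDF a b)
      (betaKernel a b q / ∫ x in Set.Ioo (0:ℝ) 1, betaKernel a b x) q := by
  have hcont : ContinuousAt (betaKernel a b) q := by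
    have c1 : ContinuousAt (fun x : ℝ => x ^ (a-1)) q :=
      Real.continuousAt_rpow_const q _ (Or.inl hq.1.ne')
    have c2 : ContinuousAt (fun x : ℝ => (1-x) ^ (b-1)) q := by
      have : ContinuousAt (fun x : ℝ => x ^ (b-1)) (1-q) :=
        Real.continuousAt_rpow_const _ _ (Or.inl (by have := hq.2; intro h; linarith [h]))
      exact this.comp ((continuous_const.sub continuous_id).continuousAt)
    exact c1.mul c2
  have h1 : HasDerivAt (fun u => ∫ x in (0:ℝ)..u, betaKernel a b x) (betaKernel a b q) q :=
    intervalIntegral.integral_hasDerivAt_right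
      (kernel_intervalIntegrable ha hb
        (by rw [Set.uIcc_of_le hq.1.le]; exact Set.Icc_subset_Icc le_rfl hq.2.le))
      ((kernel_measurable a b).stronglyMeasurable.stronglyMeasurableAtFilter)
      hcont
  have h2 := h1.div_const (∫ x in Set.Ioo (0:ℝ) 1, betaKernel a b x)
  apply h2.congr_of_eventuallyEq
  filter_upwards [isOpen_Ioi.mem_nhds hq.1] with u (hu : 0 < u)
  rw [betaCDF, integral_Ioo_eq hu.le]

lemma real_beta_eq {a b : ℝ} (ha : 0 < a) (hb : 0 < b) :
    ((∫ x in Set.Ioo (0:ℝ) 1, betaKernel a b x : ℝ) : ℂ)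
      = Complex.betaIntegral (a:ℂ) (b:ℂ) := by
  rw [integral_Ioo_eq zero_le_one, ← intervalIntegral.integral_ofReal, Complex.betaIntegral]
  rw [intervalIntegral.integral_of_le zero_le_one, intervalIntegral.integral_of_le zero_le_one]
  rw [MeasureTheory.integral_Ioc_eq_integral_Ioo, MeasureTheory.integral_Ioc_eq_integral_Ioo]
  exact setIntegral_congr_fun measurableSet_Ioo fun x hx => kernel_ofReal hx

lemma kernel_add {a b x : ℝ} (hx : x ∈ Set.Ioo (0:ℝ) 1) :
    betaKernel a (b+1) x + betaKernel (a+1) b x = betaKernel a b x := by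
  unfold betaKernel
  have h1 : x ≠ 0 := hx.1.ne'
  have h2 : (1:ℝ) - x ≠ 0 := by have := hx.2; intro h; linarith
  rw [show a+1-1 = (a-1)+1 by ring, show b+1-1 = (b-1)+1 by ring,
    Real.rpow_add_one h1, Real.rpow_add_one h2]
  ring

lemma C_recurrence {a b : ℝ} (ha : 0 < a) (hb : 0 < b) :
    ∫ x in Set.Ioo (0:ℝ) 1, betaKernel (a+1) b x
      = (a/(a+b)) * ∫ x in Set.Ioo (0:ℝ) 1, betaKernel a b x := by
  have h1 := Complex.betaIntegral_recurrence (u := (a:ℂ)) (v := (b:ℂ)) (by simpa) (by simpa)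
  have e1 : Complex.betaIntegral (a:ℂ) ((b:ℂ)+1) =
      ((∫ x in Set.Ioo (0:ℝ) 1, betaKernel a (b+1) x : ℝ) : ℂ) := by
    rw [real_beta_eq ha (by linarith : (0:ℝ) < b+1)]; push_cast; ring_nf
  have e2 : Complex.betaIntegral ((a:ℂ)+1) (b:ℂ) =
      ((∫ x in Set.Ioo (0:ℝ) 1, betaKernel (a+1) b x : ℝ) : ℂ) := by
    rw [real_beta_eq (by linarith : (0:ℝ) < a+1) hb]; push_cast; ring_nf
  rw [e1, e2] at h1
  have h1' : a * ∫ x in Set.Ioo (0:ℝ) 1, betaKernel a (b+1) x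
      = b * ∫ x in Set.Ioo (0:ℝ) 1, betaKernel (a+1) b x := by
    exact_mod_cast h1
  have h2 : (∫ x in Set.Ioo (0:ℝ) 1, betaKernel a (b+1) x)
      + ∫ x in Set.Ioo (0:ℝ) 1, betaKernel (a+1) b x
      = ∫ x in Set.Ioo (0:ℝ) 1, betaKernel a b x := by
    rw [← MeasureTheory.integral_add (kernel_integrableOn_Ioo ha (by linarith))
      (kernel_integrableOn_Ioo (by linarith) hb)]
    exact setIntegral_congr_fun measurableSet_Ioo fun x hx => kernel_add hx
  have hab : (0:ℝ) < a + b := by linarith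
  field_simp
  nlinarith [h1', h2]

noncomputable def gfun (a b q : ℝ) : ℝ :=
  a/(a+b) * (1 - 2*betaCDF (a+1) b q) + q*(2*betaCDF a b q - 1)

lemma kernel_succ {a b q : ℝ} (hq : 0 < q) :
    betaKernel (a+1) b q = q * betaKernel a b q := by
  unfold betaKernel
  rw [show a+1-1 = (a-1)+1 by ring, Real.rpow_add_one hq.ne']
  ring

lemma gfun_hasDerivAt {a b : ℝ} (ha : 0 < a) (hb : 0 < b) {q : ℝ} (hq : q ∈ Set.Ioo (0:ℝ) 1) :
    HasDerivAt (gfun a b) (2*betaCDF a b q - 1) q := by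
  have ha' : (0:ℝ) < a + 1 := by linarith
  have hC := C_pos ha hb
  have hC' := C_pos ha' hb
  have hrec := C_recurrence ha hb
  have hd1 := betaCDF_hasDerivAt ha' hb hq
  have hd2 := betaCDF_hasDerivAt ha hb hq
  have h1 : HasDerivAt (fun q => a/(a+b) * (1 - 2*betaCDF (a+1) b q))
      (a/(a+b) * (-(2 * (betaKernel (a+1) b q / ∫ x in Set.Ioo (0:ℝ) 1, betaKernel (a+1) b x)))) q :=
    (((hd1.const_mul 2).const_sub 1)).const_mul (a/(a+b))
  have h2 : HasDerivAt (fun q : ℝ => q*(2*betaCDF a b q - 1))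
      (1*(2*betaCDF a b q - 1) + q*(2 * (betaKernel a b q / ∫ x in Set.Ioo (0:ℝ) 1, betaKernel a b x))) q :=
    (hasDerivAt_id q).mul ((hd2.const_mul 2).sub_const 1)
  have := h1.add h2
  refine this.congr_deriv ?_
  rw [kernel_succ hq.1, hrec]
  have hab : (0:ℝ) < a + b := by linarith
  field_simp
  ring

lemma gfun_continuousOn {a b : ℝ} (ha : 0 < a) (hb : 0 < b) :
    ContinuousOn (gfun a b) (Set.Icc 0 1) := by
  have ha' : (0:ℝ) < a + 1 := by linarith
  exact (continuousOn_const.mul (continuousOn_const.sub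
    (continuousOn_const.mul (betaCDF_continuousOn ha' hb)))).add (continuousOn_id.mul
      ((continuousOn_const.mul (betaCDF_continuousOn ha hb)).sub continuousOn_const))

lemma gfun_deriv {a b : ℝ} (ha : 0 < a) (hb : 0 < b) {q : ℝ} (hq : q ∈ Set.Ioo (0:ℝ) 1) :
    deriv (gfun a b) q = 2*betaCDF a b q - 1 := (gfun_hasDerivAt ha hb hq).deriv

lemma gfun_strictConvexOn {a b : ℝ} (ha : 0 < a) (hb : 0 < b) :
    StrictConvexOn ℝ (Set.Icc 0 1) (gfun a b) := by
  apply StrictMonoOn.strictConvexOn_of_deriv (convex_Icc 0 1) (gfun_continuousOn ha hb)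
  rw [interior_Icc]
  intro x hx y hy hxy
  rw [gfun_deriv ha hb hx, gfun_deriv ha hb hy]
  have := betaCDF_strictMonoOn ha hb (Set.Ioo_subset_Icc_self hx)
    (Set.Ioo_subset_Icc_self hy) hxy
  linarith

lemma deriv_fn_continuousOn {a b : ℝ} (ha : 0 < a) (hb : 0 < b) :
    ContinuousOn (fun s => 2*betaCDF a b s - 1) (Set.Icc 0 1) :=
  (continuousOn_const.mul (betaCDF_continuousOn ha hb)).sub continuousOn_const

lemma gfun_diff_eq {a b : ℝ} (ha : 0 < a) (hb : 0 < b) {t₁ t₂ : ℝ}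
    (h0 : 0 ≤ t₁) (h12 : t₁ ≤ t₂) (h21 : t₂ ≤ 1) :
    gfun a b t₂ - gfun a b t₁ = ∫ s in t₁..t₂, (2*betaCDF a b s - 1) := by
  refine (intervalIntegral.integral_eq_sub_of_hasDeriv_right_of_le h12
    ((gfun_continuousOn ha hb).mono (Set.Icc_subset_Icc h0 h21))
    (fun x hx => (gfun_hasDerivAt ha hb
      ⟨lt_of_le_of_lt h0 hx.1, lt_of_lt_of_le hx.2 h21⟩).hasDerivWithinAt) ?_).symm
  exact ((deriv_fn_continuousOn ha hb).mono
    (by rw [Set.uIcc_of_le h12]; exact Set.Icc_subset_Icc h0 h21)).intervalIntegrable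

lemma gfun_diff_le {a b : ℝ} (ha : 0 < a) (hb : 0 < b) {t₁ t₂ : ℝ}
    (h0 : 0 ≤ t₁) (h12 : t₁ ≤ t₂) (h21 : t₂ ≤ 1) :
    gfun a b t₂ - gfun a b t₁ ≤ (2*betaCDF a b t₂ - 1)*(t₂ - t₁) := by
  rw [gfun_diff_eq ha hb h0 h12 h21]
  have h := intervalIntegral.integral_mono_on h12
    (((deriv_fn_continuousOn ha hb).mono
      (by rw [Set.uIcc_of_le h12]; exact Set.Icc_subset_Icc h0 h21)).intervalIntegrable)
    (_root_.intervalIntegrable_const (μ := volume) (c := 2*betaCDF a b t₂ - 1))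
    (fun s hs => by
      have hmono := (betaCDF_strictMonoOn ha hb).monotoneOn
      have := hmono ⟨le_trans h0 hs.1, le_trans hs.2 h21⟩ ⟨le_trans h0 h12, h21⟩ hs.2
      linarith)
  rw [intervalIntegral.integral_const, smul_eq_mul] at h
  linarith

lemma gfun_diff_ge {a b : ℝ} (ha : 0 < a) (hb : 0 < b) {t₁ t₂ : ℝ}
    (h0 : 0 ≤ t₁) (h12 : t₁ ≤ t₂) (h21 : t₂ ≤ 1) :
    (2*betaCDF a b t₁ - 1)*(t₂ - t₁) ≤ gfun a b t₂ - gfun a b t₁ := by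
  rw [gfun_diff_eq ha hb h0 h12 h21]
  have h := intervalIntegral.integral_mono_on h12
    (_root_.intervalIntegrable_const (μ := volume) (c := 2*betaCDF a b t₁ - 1))
    (((deriv_fn_continuousOn ha hb).mono
      (by rw [Set.uIcc_of_le h12]; exact Set.Icc_subset_Icc h0 h21)).intervalIntegrable)
    (fun s hs => by
      have hmono := (betaCDF_strictMonoOn ha hb).monotoneOn
      have := hmono ⟨h0, le_trans h12 h21⟩ ⟨le_trans h0 hs.1, le_trans hs.2 h21⟩ hs.1
      linarith)
  rw [intervalIntegral.integral_const, smul_eq_mul] at h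
  linarith

end Stmt16

open Stmt16 Set

/-- For `α i > 0` with `α₀ = ∑ i, α i`, the function
`h q = (1/2) ∑ i, [(α i / α₀)(1 - 2 F_{α i + 1, α₀ - α i}(q i))
      + q i (2 F_{α i, α₀ - α i}(q i) - 1)]`
on `(0,1)^K` restricted to the hyperplane `∑ i, q i = 1` has a unique minimizer. -/
theorem stmt_16 {K : ℕ} (hK : 2 ≤ K)
    (α : Fin K → ℝ) (hα : ∀ i, 0 < α i) (α₀ : ℝ) (hα₀ : α₀ = ∑ i, α i) :
    ∃! q : Fin K → ℝ,
      ((∀ i, q i ∈ Set.Ioo (0 : ℝ) 1) ∧ ∑ i, q i = 1) ∧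
        ∀ q' : Fin K → ℝ, (∀ i, q' i ∈ Set.Ioo (0 : ℝ) 1) → ∑ i, q' i = 1 →
          (1 / 2) * ∑ i, ((α i / α₀) * (1 - 2 * betaCDF (α i + 1) (α₀ - α i) (q i))
              + q i * (2 * betaCDF (α i) (α₀ - α i) (q i) - 1))
            ≤ (1 / 2) * ∑ i, ((α i / α₀) * (1 - 2 * betaCDF (α i + 1) (α₀ - α i) (q' i))
              + q' i * (2 * betaCDF (α i) (α₀ - α i) (q' i) - 1)) := by
  have hKpos : 0 < K := by omega
  haveI : Nonempty (Fin K) := ⟨⟨0, hKpos⟩⟩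
  have hα₀pos : 0 < α₀ := hα₀ ▸ Finset.sum_pos (fun i _ => hα i) Finset.univ_nonempty
  haveI : Nontrivial (Fin K) :=
    ⟨⟨⟨0, by omega⟩, ⟨1, by omega⟩, by simp [Fin.ext_iff]⟩⟩
  have hne : ∀ i : Fin K, ∃ j : Fin K, j ≠ i := fun i => exists_ne i
  have hb : ∀ i, 0 < α₀ - α i := by
    intro i
    obtain ⟨j, hj⟩ := hne i
    have := Finset.single_lt_sum hj (Finset.mem_univ i) (Finset.mem_univ j) (hα j)
      (fun k _ _ => (hα k).le)
    rw [← hα₀] at this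
    linarith
  set g : Fin K → ℝ → ℝ := fun i => gfun (α i) (α₀ - α i) with hg_def
  have hg_eq : ∀ i (q : ℝ), g i q = (α i / α₀) * (1 - 2 * betaCDF (α i + 1) (α₀ - α i) q)
      + q * (2 * betaCDF (α i) (α₀ - α i) q - 1) := by
    intro i q
    simp only [hg_def, gfun]
    rw [show α i + (α₀ - α i) = α₀ by ring]
  set H : (Fin K → ℝ) → ℝ := fun q => (1/2) * ∑ i, g i (q i) with hH_def
  have hobj : ∀ q : Fin K → ℝ,
      (1 / 2) * ∑ i, ((α i / α₀) * (1 - 2 * betaCDF (α i + 1) (α₀ - α i) (q i))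
        + q i * (2 * betaCDF (α i) (α₀ - α i) (q i) - 1)) = H q := by
    intro q
    simp only [hH_def]
    congr 1
    exact (Finset.sum_congr rfl fun i _ => (hg_eq i (q i)).symm)
  set S : Set (Fin K → ℝ) := {q | (∀ i, q i ∈ Set.Icc (0:ℝ) 1) ∧ ∑ i, q i = 1} with hS_def
  have hS_compact : IsCompact S := by
    have h1 : S = (Set.pi Set.univ fun _ : Fin K => Set.Icc (0:ℝ) 1)
        ∩ {q : Fin K → ℝ | ∑ i, q i = 1} := by
      ext q
      simp only [hS_def, Set.mem_setOf_eq, Set.mem_inter_iff, Set.mem_univ_pi]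
    rw [h1]
    exact (isCompact_univ_pi fun _ => isCompact_Icc).inter_right
      (isClosed_eq (continuous_finset_sum _ fun i _ => continuous_apply i) continuous_const)
  have hS_ne : S.Nonempty := by
    refine ⟨fun _ => (K:ℝ)⁻¹, fun i => ?_, ?_⟩
    · constructor
      · positivity
      · exact inv_le_one_of_one_le₀ (by exact_mod_cast Nat.one_le_iff_ne_zero.mpr (by omega))
    · rw [Finset.sum_const, Finset.card_univ, Fintype.card_fin, nsmul_eq_mul]
      field_simp
  have hH_cont : ContinuousOn H S := by
    apply ContinuousOn.mul continuousOn_const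
    apply continuousOn_finset_sum
    intro i _
    exact (gfun_continuousOn (hα i) (hb i)).comp
      (continuous_apply i).continuousOn (fun q hq => hq.1 i)
  obtain ⟨w, hwS, hwmin⟩ := hS_compact.exists_isMinOn hS_ne hH_cont
  rw [isMinOn_iff] at hwmin
  have hw_pos : ∀ i, 0 < w i := by
    by_contra hcon
    push_neg at hcon
    obtain ⟨i, hi⟩ := hcon
    have hi0 : w i = 0 := le_antisymm hi (hwS.1 i).1
    have hex : ∃ j, 0 < w j := by
      by_contra hall
      push_neg at hall
      have h1 : ∑ k, w k ≤ 0 := Finset.sum_nonpos fun k _ => hall k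
      rw [hwS.2] at h1; linarith
    obtain ⟨j, hj⟩ := hex
    have hij : i ≠ j := fun h => by rw [h] at hi0; rw [hi0] at hj; exact lt_irrefl _ hj
    have hwj1 : w j ≤ 1 := (hwS.1 j).2
    set c := betaCDF (α j) (α₀ - α j) (w j) with hc_def
    have hc : 0 < c := betaCDF_pos (hα j) (hb j) ⟨hj, hwj1⟩
    have hFi : Filter.Tendsto (betaCDF (α i) (α₀ - α i))
        (nhdsWithin 0 (Set.Ioi 0)) (nhds 0) := by
      have h1 : ContinuousWithinAt (betaCDF (α i) (α₀ - α i)) (Set.Icc 0 1) 0 :=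
        (betaCDF_continuousOn (hα i) (hb i)) 0 (Set.left_mem_Icc.mpr zero_le_one)
      have h2 := h1.tendsto
      rw [betaCDF_zero] at h2
      have h3 : nhdsWithin (0:ℝ) (Set.Ioi 0) ≤ nhdsWithin 0 (Set.Icc 0 1) := by
        rw [← nhdsWithin_Ioc_eq_nhdsGT (zero_lt_one (α := ℝ))]
        exact nhdsWithin_mono _ Set.Ioc_subset_Icc_self
      exact h2.mono_left h3
    have hFj : Filter.Tendsto (fun t => betaCDF (α j) (α₀ - α j) (w j - t))
        (nhdsWithin 0 (Set.Ioi 0)) (nhds c) := by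
      have h1 : ContinuousWithinAt (betaCDF (α j) (α₀ - α j)) (Set.Icc 0 1) (w j) :=
        (betaCDF_continuousOn (hα j) (hb j)) (w j) ⟨hj.le, hwj1⟩
      apply h1.tendsto.comp
      rw [tendsto_nhdsWithin_iff]
      constructor
      · have h4 : Filter.Tendsto (fun t : ℝ => w j - t) (nhdsWithin 0 (Set.Ioi 0))
            (nhds (w j - 0)) :=
          tendsto_const_nhds.sub ((continuous_id.tendsto 0).mono_left nhdsWithin_le_nhds)
        simpa using h4
      · filter_upwards [Ioo_mem_nhdsGT_of_mem (Set.left_mem_Ico.mpr hj)] with t ht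
        exact ⟨by linarith [ht.2], by linarith [ht.1]⟩
    have E1 : ∀ᶠ t in nhdsWithin (0:ℝ) (Set.Ioi 0), t ∈ Set.Ioo 0 (w j) :=
      Ioo_mem_nhdsGT_of_mem (Set.left_mem_Ico.mpr hj)
    have E2 : ∀ᶠ t in nhdsWithin (0:ℝ) (Set.Ioi 0),
        betaCDF (α i) (α₀ - α i) t < c/2 := hFi.eventually_lt_const (by linarith)
    have E3 : ∀ᶠ t in nhdsWithin (0:ℝ) (Set.Ioi 0),
        c/2 < betaCDF (α j) (α₀ - α j) (w j - t) := hFj.eventually_const_lt (by linarith)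
    obtain ⟨t, ht_mem, ht2, ht3⟩ := (E1.and (E2.and E3)).exists
    obtain ⟨ht0, htwj⟩ := ht_mem
    have ht1 : t ≤ 1 := le_trans htwj.le hwj1
    have hji : j ≠ i := Ne.symm hij
    set z : Fin K → ℝ := fun k => if k = i then t else if k = j then w j - t else w k with hz_def
    have hzi : z i = t := by simp [hz_def]
    have hzj : z j = w j - t := by simp [hz_def, hji]
    have hzS : z ∈ S := by
      refine ⟨fun k => ?_, ?_⟩
      · by_cases hk1 : k = i
        · subst hk1; rw [hzi]; exact ⟨ht0.le, ht1⟩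
        · by_cases hk2 : k = j
          · subst hk2; rw [hzj]; exact ⟨by linarith, by linarith⟩
          · simp only [hz_def, hk1, hk2, if_false]; exact hwS.1 k
      · have hsplit : ∀ k, z k = w k +
            ((if k = i then t - w i else 0) + (if k = j then -t else 0)) := by
          intro k
          by_cases hk1 : k = i
          · subst hk1; simp [hz_def, hij]
          · by_cases hk2 : k = j
            · subst hk2; simp only [hz_def, hk1, if_false, if_true]; ring
            · simp [hz_def, hk1, hk2]
        rw [Finset.sum_congr rfl fun k _ => hsplit k, Finset.sum_add_distrib,
          Finset.sum_add_distrib, Finset.sum_ite_eq' Finset.univ i,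
          Finset.sum_ite_eq' Finset.univ j]
        simp [hwS.2, hi0]
    have hdiff : (∑ k, g k (z k)) - ∑ k, g k (w k)
        = (g i t - g i 0) + (g j (w j - t) - g j (w j)) := by
      rw [← Finset.sum_sub_distrib]
      have hterm : ∀ k, g k (z k) - g k (w k)
          = (if k = i then g i t - g i 0 else 0)
            + (if k = j then g j (w j - t) - g j (w j) else 0) := by
        intro k
        by_cases hk1 : k = i
        · subst hk1; rw [hzi, hi0]; simp [hij]
        · by_cases hk2 : k = j
          · subst hk2; rw [hzj]; simp [hk1]
          · simp [hz_def, hk1, hk2]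
      rw [Finset.sum_congr rfl fun k _ => hterm k, Finset.sum_add_distrib,
        Finset.sum_ite_eq' Finset.univ i, Finset.sum_ite_eq' Finset.univ j]
      simp
    have hle1 : g i t - g i 0 ≤ (2 * betaCDF (α i) (α₀ - α i) t - 1) * t := by
      have h5 := gfun_diff_le (hα i) (hb i) (le_refl (0:ℝ)) ht0.le ht1
      simpa using h5
    have hge1 : (2 * betaCDF (α j) (α₀ - α j) (w j - t) - 1) * t
        ≤ g j (w j) - g j (w j - t) := by
      have h5 := gfun_diff_ge (hα j) (hb j) (t₁ := w j - t) (t₂ := w j)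
        (by linarith) (by linarith) hwj1
      rw [show w j - (w j - t) = t by ring] at h5
      exact h5
    have hHz : H z < H w := by
      simp only [hH_def]
      have hkey : (∑ k, g k (z k)) < ∑ k, g k (w k) := by
        have h6 : (2 * betaCDF (α i) (α₀ - α i) t - 1) * t
            - (2 * betaCDF (α j) (α₀ - α j) (w j - t) - 1) * t < 0 := by
          have h7 : betaCDF (α i) (α₀ - α i) t < betaCDF (α j) (α₀ - α j) (w j - t) :=
            lt_trans ht2 ht3
          nlinarith [mul_pos ht0 (sub_pos.mpr h7)]
        linarith [hdiff, hle1, hge1]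
      linarith
    exact absurd (hwmin z hzS) (not_le.mpr hHz)
  have hw1 : ∀ i, w i < 1 := by
    intro i
    obtain ⟨j, hj⟩ := hne i
    have h8 := Finset.single_lt_sum hj (Finset.mem_univ i) (Finset.mem_univ j) (hw_pos j)
      (fun k _ _ => (hwS.1 k).1)
    rw [hwS.2] at h8; exact h8
  have hw_mem : ∀ i, w i ∈ Set.Ioo (0:ℝ) 1 := fun i => ⟨hw_pos i, hw1 i⟩
  refine ⟨w, ⟨⟨hw_mem, hwS.2⟩, ?_⟩, ?_⟩
  · intro q' hq' hq'sum
    rw [hobj w, hobj q']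
    exact hwmin q' ⟨fun i => ⟨(hq' i).1.le, (hq' i).2.le⟩, hq'sum⟩
  · rintro y ⟨⟨hy_mem, hy_sum⟩, hy_min⟩
    have hyS : y ∈ S := ⟨fun i => ⟨(hy_mem i).1.le, (hy_mem i).2.le⟩, hy_sum⟩
    have h1 : H y ≤ H w := by
      have h9 := hy_min w hw_mem hwS.2
      rwa [hobj y, hobj w] at h9
    have h2 : H w ≤ H y := hwmin y hyS
    have heq : H y = H w := le_antisymm h1 h2
    by_contra hne'
    have hex : ∃ i, y i ≠ w i := by
      by_contra hall; push_neg at hall; exact hne' (funext hall)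
    obtain ⟨i₀, hi₀⟩ := hex
    set m : Fin K → ℝ := fun k => (y k + w k)/2 with hm_def
    have hm_arg : ∀ k, m k = (1/2)*(y k) + (1/2)*(w k) := by
      intro k; simp only [hm_def]; ring
    have hm_mem : ∀ i, m i ∈ Set.Ioo (0:ℝ) 1 := by
      intro i
      have h3 := hy_mem i; have h4 := hw_mem i
      exact ⟨by simp only [hm_def]; linarith [h3.1, h4.1],
        by simp only [hm_def]; linarith [h3.2, h4.2]⟩
    have hm_sum : ∑ i, m i = 1 := by
      simp only [hm_def]
      rw [← Finset.sum_div, Finset.sum_add_distrib, hy_sum, hwS.2]; norm_num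
    have hconv : ∀ k, g k (m k) ≤ (g k (y k) + g k (w k))/2 := by
      intro k
      have hcv := (gfun_strictConvexOn (hα k) (hb k)).convexOn
      have h10 := hcv.2 (⟨(hy_mem k).1.le, (hy_mem k).2.le⟩ : y k ∈ Set.Icc (0:ℝ) 1)
        (⟨(hw_mem k).1.le, (hw_mem k).2.le⟩ : w k ∈ Set.Icc (0:ℝ) 1)
        (by norm_num : (0:ℝ) ≤ 1/2) (by norm_num : (0:ℝ) ≤ 1/2) (by norm_num)
      simp only [smul_eq_mul] at h10
      rw [hm_arg k]
      calc g k ((1/2)*(y k) + (1/2)*(w k)) ≤ (1/2)*g k (y k) + (1/2)*g k (w k) := h10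
        _ = (g k (y k) + g k (w k))/2 := by ring
    have hstrict : g i₀ (m i₀) < (g i₀ (y i₀) + g i₀ (w i₀))/2 := by
      have hcv := gfun_strictConvexOn (hα i₀) (hb i₀)
      have h10 := hcv.2 (⟨(hy_mem i₀).1.le, (hy_mem i₀).2.le⟩ : y i₀ ∈ Set.Icc (0:ℝ) 1)
        (⟨(hw_mem i₀).1.le, (hw_mem i₀).2.le⟩ : w i₀ ∈ Set.Icc (0:ℝ) 1) hi₀
        (by norm_num : (0:ℝ) < 1/2) (by norm_num : (0:ℝ) < 1/2) (by norm_num)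
      simp only [smul_eq_mul] at h10
      rw [hm_arg i₀]
      calc g i₀ ((1/2)*(y i₀) + (1/2)*(w i₀)) < (1/2)*g i₀ (y i₀) + (1/2)*g i₀ (w i₀) := h10
        _ = (g i₀ (y i₀) + g i₀ (w i₀))/2 := by ring
    have hsum_lt : (∑ k, g k (m k)) < ∑ k, ((g k (y k) + g k (w k))/2) :=
      Finset.sum_lt_sum (fun k _ => hconv k) ⟨i₀, Finset.mem_univ i₀, hstrict⟩
    have hsplit2 : (∑ k, ((g k (y k) + g k (w k))/2))
        = ((∑ k, g k (y k)) + ∑ k, g k (w k))/2 := by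
      rw [← Finset.sum_div, Finset.sum_add_distrib]
    have hHm : H m < H w := by
      simp only [hH_def] at heq ⊢
      linarith [hsum_lt, hsplit2]
    have h11 := hy_min m hm_mem hm_sum
    rw [hobj y, hobj m] at h11
    have : H y = H w := heq
    linarith [hHm, h11, heq.ge, heq.le]
end
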